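/- Let Q be an n×n symmetric positive definite matrix, c ∈ ℝ^n, f(x) := (1/2)⟨x, Qx⟩ + ⟨c, x⟩, T : ℝ^n → ℝ^m linear, b ∈ ℝ^m, and K ⊆ ℝ^m a regular closed convex cone (ℝ^n and ℝ^m with the Euclidean inner product). Suppose there exist ê ∈ ℝ^n with e := T ê ∈ int K and ε > 0 with T ê + ε b ∈ K (so that ê/ε is feasible for the primal min{f(x) : Tx + b ∈ K}). Then every optimal solution y_opt of the dual problem min{f*(T*y) + ⟨b, y⟩ : y ∈ K*} satisfies ⟨e, y_opt⟩ ≤ ‖ê‖ · sqrt((2 f(ê/ε) + ⟨c, Q^{-1} c⟩) / λ_min(Q^{-1})), where λ_min(Q^{-1}) > 0 is the minimum eigenvalue of Q^{-1}. -/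

import Mathlib

open scoped RealInnerProductSpace

/-- The Fenchel conjugate `f*(s) = sup_x (⟨s,x⟩ - f(x))`. -/
noncomputable def fenchelConj {n : ℕ} (f : EuclideanSpace ℝ (Fin n) → ℝ)
    (s : EuclideanSpace ℝ (Fin n)) : ℝ :=
  ⨆ x, (⟪s, x⟫ - f x)

/-- The dual objective `h(y) = f*(T*y) + ⟨b,y⟩`. -/
noncomputable def dualObj {n m : ℕ} (f : EuclideanSpace ℝ (Fin n) → ℝ)
    (T : EuclideanSpace ℝ (Fin n) →L[ℝ] EuclideanSpace ℝ (Fin m))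
    (b y : EuclideanSpace ℝ (Fin m)) : ℝ :=
  fenchelConj f (ContinuousLinearMap.adjoint T y) + ⟪b, y⟫

/-- The quadratic objective `f(x) = (1/2)⟨x, Qx⟩ + ⟨c, x⟩`. -/
noncomputable def quadObj {n : ℕ} (Q : Matrix (Fin n) (Fin n) ℝ)
    (c x : EuclideanSpace ℝ (Fin n)) : ℝ :=
  1 / 2 * ⟪x, Matrix.toEuclideanLin Q x⟫ + ⟪c, x⟫

private lemma posdef_inner_pos' {n : ℕ} {M : Matrix (Fin n) (Fin n) ℝ} (hM : M.PosDef)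
    {x : EuclideanSpace ℝ (Fin n)} (hx : x ≠ 0) : 0 < ⟪x, Matrix.toEuclideanLin M x⟫ := by
  rw [Matrix.toEuclideanLin_apply, EuclideanSpace.inner_eq_star_dotProduct]
  simpa [dotProduct_comm] using hM.dotProduct_mulVec_pos (x := WithLp.equiv _ _ x) (by simpa using hx)

private lemma posdef_inner_nonneg' {n : ℕ} {M : Matrix (Fin n) (Fin n) ℝ} (hM : M.PosDef)
    (x : EuclideanSpace ℝ (Fin n)) : 0 ≤ ⟪x, Matrix.toEuclideanLin M x⟫ := by
  rcases eq_or_ne x 0 with rfl | hx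
  · simp
  · exact (posdef_inner_pos' hM hx).le

private lemma toEuclideanLin_mul_apply' {n : ℕ} (M N : Matrix (Fin n) (Fin n) ℝ)
    (x : EuclideanSpace ℝ (Fin n)) :
    Matrix.toEuclideanLin (M * N) x = Matrix.toEuclideanLin M (Matrix.toEuclideanLin N x) := by
  simp [Matrix.toEuclideanLin_apply, Matrix.mulVec_mulVec]


private lemma quad_ray_min' {a β : ℝ} (ha : 0 ≤ a)
    (hmin : ∀ t : ℝ, 0 ≤ t → a + β ≤ a * t ^ 2 + β * t) : 2 * a + β ≤ 0 := by
  have h0 : 2 * a + β ≤ 0 + 0 → 2 * a + β ≤ 0 := by intro h; linarith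
  apply h0
  rw [← zero_add (0 : ℝ)]
  apply le_of_forall_pos_le_add
  intro δ hδ
  rcases eq_or_lt_of_le ha with h0a | hapos
  · have hm0 := hmin 0 le_rfl
    nlinarith
  · set t : ℝ := max 0 (1 - δ / a) with ht'
    have ht0 : 0 ≤ t := le_max_left _ _
    have ht1 : t < 1 := by
      apply max_lt one_pos
      have : 0 < δ / a := div_pos hδ hapos
      linarith
    have hkey := hmin t ht0
    have hfac : (1 - t) * (a * (1 + t) + β) ≤ 0 := by nlinarith
    have h1 : a * (1 + t) + β ≤ 0 := by nlinarith [sub_pos.2 ht1]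
    have h2 : 1 - δ / a ≤ t := le_max_right _ _
    have hda : a * (δ / a) = δ := by field_simp
    have h3 : a * (1 - t) ≤ δ := by
      nlinarith [mul_le_mul_of_nonneg_left (by linarith : 1 - t ≤ δ / a) hapos.le]
    nlinarith

private lemma le_of_sq_le' {N P W : ℝ} (hN : 0 ≤ N) (hW : 0 ≤ W)
    (h1 : N ≤ P) (h2 : P ^ 2 ≤ W * N) : N ≤ W := by
  rcases eq_or_lt_of_le hN with h0N | hNpos
  · linarith
  · nlinarith [pow_le_pow_left₀ hN h1 2]

private lemma fenchel_quad {n : ℕ} (Q : Matrix (Fin n) (Fin n) ℝ) (hQpd : Q.PosDef)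
    (c s : EuclideanSpace ℝ (Fin n)) :
    fenchelConj (quadObj Q c) s
      = 1 / 2 * ⟪s - c, Matrix.toEuclideanLin Q⁻¹ (s - c)⟫ := by
  set A := Matrix.toEuclideanLin Q⁻¹ with hA
  set B := Matrix.toEuclideanLin Q with hB
  have hdet : IsUnit Q.det := isUnit_iff_ne_zero.2 hQpd.det_pos.ne'
  have hBA : ∀ x, B (A x) = x := by
    intro x
    rw [hA, hB, ← toEuclideanLin_mul_apply', Matrix.mul_nonsing_inv Q hdet]
    simp [Matrix.toEuclideanLin_apply]
  have hAB : ∀ x, A (B x) = x := by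
    intro x
    rw [hA, hB, ← toEuclideanLin_mul_apply', Matrix.nonsing_inv_mul Q hdet]
    simp [Matrix.toEuclideanLin_apply]
  have hAsym : ∀ x y, ⟪A x, y⟫ = ⟪x, A y⟫ := Matrix.isHermitian_iff_isSymmetric.1 hQpd.inv.1
  set d := s - c with hd
  have hub : ∀ x, ⟪s, x⟫ - quadObj Q c x ≤ 1 / 2 * ⟪d, A d⟫ := by
    intro x
    have h0 : 0 ≤ ⟪x - A d, B (x - A d)⟫ := posdef_inner_nonneg' hQpd _
    have h1 : ⟪A d, B x⟫ = ⟪d, x⟫ := by rw [hAsym, hAB]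
    have h2 : ⟪A d, d⟫ = ⟪d, A d⟫ := real_inner_comm _ _
    have h3 : ⟪x, d⟫ = ⟪d, x⟫ := real_inner_comm _ _
    have h4 : ⟪x, B (A d)⟫ = ⟪x, d⟫ := by rw [hBA]
    have h7 : ⟪A d, B (A d)⟫ = ⟪d, A d⟫ := by rw [hBA]; exact h2
    have hexp : ⟪x - A d, B (x - A d)⟫ = ⟪x, B x⟫ - 2 * ⟪d, x⟫ + ⟪d, A d⟫ := by
      rw [map_sub B x (A d), inner_sub_left x (A d), inner_sub_right x (B x) (B (A d)),
        inner_sub_right (A d) (B x) (B (A d)), h1, h4, h3, h7]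
      ring
    have h5 : ⟪s, x⟫ - ⟪c, x⟫ = ⟪d, x⟫ := (inner_sub_left s c x).symm
    rw [quadObj]
    linarith [hexp ▸ h0]
  have hval : ⟪s, A d⟫ - quadObj Q c (A d) = 1 / 2 * ⟪d, A d⟫ := by
    have h5 : ⟪s, A d⟫ - ⟪c, A d⟫ = ⟪d, A d⟫ := (inner_sub_left s c _).symm
    have h6 : ⟪A d, B (A d)⟫ = ⟪A d, d⟫ := by rw [hBA]
    have h2 : ⟪A d, d⟫ = ⟪d, A d⟫ := real_inner_comm _ _
    rw [quadObj]
    linarith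
  rw [fenchelConj]
  apply le_antisymm
  · exact ciSup_le hub
  · rw [← hval]
    exact le_ciSup ⟨1 / 2 * ⟪d, A d⟫, by rintro r ⟨x, rfl⟩; exact hub x⟩ (A d)

/-- For a positive definite quadratic objective
`f(x) = (1/2)⟨x,Qx⟩ + ⟨c,x⟩` over `{x : Tx + b ∈ K}` with `K` regular, if
`ê` satisfies `e := T ê ∈ int K` and `T ê + ε b ∈ K` for some `ε > 0` (so `ê/ε` is
primal feasible), then every dual optimal solution `y_opt` satisfies
`⟨e, y_opt⟩ ≤ ‖ê‖ sqrt((2 f(ê/ε) + ⟨c, Q⁻¹ c⟩) / λ_min(Q⁻¹))`. -/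
theorem stmt_19 {n m : ℕ}
    (Q : Matrix (Fin n) (Fin n) ℝ) (hQsymm : Q.IsSymm) (hQpd : Q.PosDef)
    (c : EuclideanSpace ℝ (Fin n))
    (T : EuclideanSpace ℝ (Fin n) →L[ℝ] EuclideanSpace ℝ (Fin m))
    (b : EuclideanSpace ℝ (Fin m)) (K : Set (EuclideanSpace ℝ (Fin m)))
    (hclosed : IsClosed K) (hconv : Convex ℝ K)
    (hcone : ∀ (γ : ℝ), 0 ≤ γ → ∀ x ∈ K, γ • x ∈ K)
    (hpointed : K ∩ (-K) = {0}) (hfull : (interior K).Nonempty)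
    (ehat : EuclideanSpace ℝ (Fin n))
    (he : T ehat ∈ interior K)
    (ε : ℝ) (hε : 0 < ε) (hfeas : T ehat + ε • b ∈ K)
    (lam : ℝ)
    (hlam : IsGreatest {r : ℝ | ∀ v : EuclideanSpace ℝ (Fin n),
      r * ‖v‖ ^ 2 ≤ ⟪v, Matrix.toEuclideanLin Q⁻¹ v⟫} lam)
    (yopt : EuclideanSpace ℝ (Fin m))
    (hyoptK : ∀ x ∈ K, 0 ≤ ⟪x, yopt⟫)
    (hyoptmin : ∀ y : EuclideanSpace ℝ (Fin m), (∀ x ∈ K, 0 ≤ ⟪x, y⟫) →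
      dualObj (quadObj Q c) T b yopt ≤ dualObj (quadObj Q c) T b y) :
    ⟪T ehat, yopt⟫ ≤ ‖ehat‖ * Real.sqrt
      ((2 * quadObj Q c (ε⁻¹ • ehat) + ⟪c, Matrix.toEuclideanLin Q⁻¹ c⟫) / lam) := by
  rcases Nat.eq_zero_or_pos n with hn0 | hn
  · subst hn0
    have hz : ehat = 0 := by
      ext i
      exact absurd i.2 (by omega)
    rw [hz]
    simp
  -- abbreviations
  set A := Matrix.toEuclideanLin Q⁻¹ with hA
  set B := Matrix.toEuclideanLin Q with hB
  have hdet : IsUnit Q.det := isUnit_iff_ne_zero.2 hQpd.det_pos.ne'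
  have hBA : ∀ x, B (A x) = x := by
    intro x
    rw [hA, hB, ← toEuclideanLin_mul_apply', Matrix.mul_nonsing_inv Q hdet]
    simp [Matrix.toEuclideanLin_apply]
  have hAB : ∀ x, A (B x) = x := by
    intro x
    rw [hA, hB, ← toEuclideanLin_mul_apply', Matrix.nonsing_inv_mul Q hdet]
    simp [Matrix.toEuclideanLin_apply]
  have hAsym : ∀ x y, ⟪A x, y⟫ = ⟪x, A y⟫ := Matrix.isHermitian_iff_isSymmetric.1 hQpd.inv.1
  have hBsym : ∀ x y, ⟪B x, y⟫ = ⟪x, B y⟫ := Matrix.isHermitian_iff_isSymmetric.1 hQpd.1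
  set s := ContinuousLinearMap.adjoint T yopt with hs
  set u := ε⁻¹ • ehat with hu
  -- positivity of lam
  have hlampos : 0 < lam := by
    haveI : Nontrivial (EuclideanSpace ℝ (Fin n)) := by
      apply Module.nontrivial_of_finrank_pos (R := ℝ)
      rw [finrank_euclideanSpace_fin]
      exact hn
    obtain ⟨v₀, hv₀mem, hv₀min⟩ := (isCompact_sphere (0 : EuclideanSpace ℝ (Fin n)) 1).exists_isMinOn
      (f := fun v => (⟪v, A v⟫ : ℝ)) (NormedSpace.sphere_nonempty.2 zero_le_one)
      ((Continuous.inner continuous_id A.continuous_of_finiteDimensional).continuousOn)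
    have hv₀ne : v₀ ≠ 0 := by
      intro h
      rw [mem_sphere_iff_norm, h] at hv₀mem
      simp at hv₀mem
    have hrpos : 0 < ⟪v₀, A v₀⟫ := posdef_inner_pos' hQpd.inv hv₀ne
    have hmem : ∀ v : EuclideanSpace ℝ (Fin n), ⟪v₀, A v₀⟫ * ‖v‖ ^ 2 ≤ ⟪v, A v⟫ := by
      intro v
      rcases eq_or_ne v 0 with rfl | hv
      · simp
      · have hnv : 0 < ‖v‖ := norm_pos_iff.2 hv
        have hw : (‖v‖⁻¹ • v) ∈ Metric.sphere (0 : EuclideanSpace ℝ (Fin n)) 1 := by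
          rw [mem_sphere_iff_norm, sub_zero, norm_smul, norm_inv, norm_norm,
            inv_mul_cancel₀ hnv.ne']
        have hle := isMinOn_iff.1 hv₀min _ hw
        rw [real_inner_smul_left, map_smul, real_inner_smul_right] at hle
        have h5 := mul_le_mul_of_nonneg_left hle (sq_nonneg ‖v‖)
        have h6 : ‖v‖ ^ 2 * (‖v‖⁻¹ * (‖v‖⁻¹ * ⟪v, A v⟫)) = ⟪v, A v⟫ := by
          field_simp
        linarith [h5, h6]
    exact lt_of_lt_of_le hrpos (hlam.2 hmem)
  -- symmetric cross term
  have hsc : ⟪s, A c⟫ = ⟪c, A s⟫ := by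
    rw [← hAsym s c]
    exact real_inner_comm _ _
  -- dual objective along the ray t • yopt
  have hexpand : ∀ t : ℝ, dualObj (quadObj Q c) T b (t • yopt)
      = 1 / 2 * ⟪s, A s⟫ * t ^ 2 + (⟪b, yopt⟫ - ⟪c, A s⟫) * t + 1 / 2 * ⟪c, A c⟫ := by
    intro t
    rw [dualObj, fenchel_quad Q hQpd, map_smul, real_inner_smul_right]
    have e1 : ⟪t • s - c, A (t • s - c)⟫
        = t ^ 2 * ⟪s, A s⟫ - 2 * t * ⟪c, A s⟫ + ⟪c, A c⟫ := by
      simp only [map_sub, map_smul, inner_sub_left, inner_sub_right, real_inner_smul_left,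
        real_inner_smul_right, hsc]
      ring
    rw [e1]
    ring
  have hD : dualObj (quadObj Q c) T b yopt
      = 1 / 2 * ⟪s, A s⟫ + (⟪b, yopt⟫ - ⟪c, A s⟫) + 1 / 2 * ⟪c, A c⟫ := by
    have h1 := hexpand 1
    rw [one_smul] at h1
    rw [h1]; ring
  have hmin : ∀ t : ℝ, 0 ≤ t →
      1 / 2 * ⟪s, A s⟫ + (⟪b, yopt⟫ - ⟪c, A s⟫)
        ≤ 1 / 2 * ⟪s, A s⟫ * t ^ 2 + (⟪b, yopt⟫ - ⟪c, A s⟫) * t := by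
    intro t ht
    have hy : ∀ x ∈ K, 0 ≤ ⟪x, t • yopt⟫ := by
      intro x hx
      rw [real_inner_smul_right]
      exact mul_nonneg ht (hyoptK x hx)
    have := hyoptmin (t • yopt) hy
    rw [hexpand t, hD] at this
    linarith
  have haN : 0 ≤ ⟪s, A s⟫ := posdef_inner_nonneg' hQpd.inv s
  have h2ab : 2 * (1 / 2 * ⟪s, A s⟫) + (⟪b, yopt⟫ - ⟪c, A s⟫) ≤ 0 :=
    quad_ray_min' (by linarith) hmin
  -- feasibility
  have hadj1 : ⟪ehat, s⟫ = ⟪T ehat, yopt⟫ := ContinuousLinearMap.adjoint_inner_right T ehat yopt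
  have hfeas' : -⟪b, yopt⟫ ≤ ⟪u, s⟫ := by
    have h0 := hyoptK _ hfeas
    rw [inner_add_left, real_inner_smul_left] at h0
    rw [hu, real_inner_smul_left, hadj1]
    have h1 : ε * -⟪b, yopt⟫ ≤ ⟪T ehat, yopt⟫ := by linarith
    have h2 := mul_le_mul_of_nonneg_left h1 (inv_nonneg.2 hε.le)
    rw [← mul_assoc, inv_mul_cancel₀ hε.ne', one_mul] at h2
    linarith
  -- combine
  have hus : ⟪B u, A s⟫ = ⟪u, s⟫ := by rw [hBsym, hBA]
  have hstep2 : ⟪s, A s⟫ ≤ ⟪c + B u, A s⟫ := by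
    rw [inner_add_left, hus]
    linarith
  -- Cauchy-Schwarz for the Q⁻¹ form
  have hCS : ⟪c + B u, A s⟫ ^ 2 ≤ ⟪c + B u, A (c + B u)⟫ * ⟪s, A s⟫ := by
    set w := c + B u with hw
    have hquad : ∀ t : ℝ, 0 ≤ ⟪s, A s⟫ * (t * t) + 2 * ⟪w, A s⟫ * t + ⟪w, A w⟫ := by
      intro t
      have h0 : 0 ≤ ⟪w + t • s, A (w + t • s)⟫ := posdef_inner_nonneg' hQpd.inv _
      have hws : ⟪s, A w⟫ = ⟪w, A s⟫ := by
        rw [← hAsym s w]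
        exact real_inner_comm _ _
      have hexp : ⟪w + t • s, A (w + t • s)⟫
          = ⟪s, A s⟫ * (t * t) + 2 * ⟪w, A s⟫ * t + ⟪w, A w⟫ := by
        simp only [map_add, map_smul, inner_add_left, inner_add_right, real_inner_smul_left,
          real_inner_smul_right, hws]
        ring
      linarith [hexp ▸ h0]
    have hdisc := discrim_le_zero hquad
    rw [discrim] at hdisc
    linarith [hdisc]
  have hW0 : 0 ≤ ⟪c + B u, A (c + B u)⟫ := posdef_inner_nonneg' hQpd.inv _
  have hNM : ⟪s, A s⟫ ≤ ⟪c + B u, A (c + B u)⟫ :=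
    le_of_sq_le' haN hW0 hstep2 hCS
  -- identify M
  have hMeq : ⟪c + B u, A (c + B u)⟫ = 2 * quadObj Q c u + ⟪c, A c⟫ := by
    have h1 : ⟪c, A (B u)⟫ = ⟪c, u⟫ := by rw [hAB]
    have h2 : ⟪B u, A c⟫ = ⟪u, c⟫ := by rw [hBsym, hBA]
    have h3 : ⟪B u, A (B u)⟫ = ⟪u, B u⟫ := by
      rw [hAB]
      exact real_inner_comm _ _
    have h4 : ⟪u, c⟫ = ⟪c, u⟫ := real_inner_comm _ _
    have h5 : A (c + B u) = A c + A (B u) := map_add A c (B u)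
    rw [quadObj, h5, inner_add_left, inner_add_right, inner_add_right, h1, h2, h3, h4]
    ring
  -- finish
  have hlams := hlam.1 s
  have hfin : lam * ‖s‖ ^ 2 ≤ 2 * quadObj Q c u + ⟪c, A c⟫ := by
    rw [← hMeq]
    calc lam * ‖s‖ ^ 2 ≤ ⟪s, A s⟫ := hlams
      _ ≤ _ := hNM
  have hs2 : ‖s‖ ^ 2 ≤ (2 * quadObj Q c u + ⟪c, A c⟫) / lam := by
    rw [le_div_iff₀ hlampos]
    linarith
  have hnorm : ‖s‖ ≤ Real.sqrt ((2 * quadObj Q c u + ⟪c, A c⟫) / lam) := by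
    rw [← Real.sqrt_sq (norm_nonneg s)]
    exact Real.sqrt_le_sqrt hs2
  calc ⟪T ehat, yopt⟫ = ⟪ehat, s⟫ := hadj1.symm
    _ ≤ ‖ehat‖ * ‖s‖ := real_inner_le_norm _ _
    _ ≤ ‖ehat‖ * Real.sqrt ((2 * quadObj Q c u + ⟪c, A c⟫) / lam) :=
        mul_le_mul_of_nonneg_left hnorm (norm_nonneg _)
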